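/- arXiv:2302.04153 — 3 statements merged into one kernel-verified Lean document; each statement's English description precedes it below -/
import Mathlib

section
/- Let $k$ be an algebraically closed field of characteristic $p > 0$, let $V$ be a finite-dimensional $k$-vector space, let $f : V \to V$ be a $k$-linear bijection, and let $C : V \to V$ be a Frobenius-semilinear map (i.e., additive with $C(\lambda v) = \lambda^p C(v)$ for all $\lambda \in k$, $v \in V$). Then the map $f - C : V \to V$ is surjective. -/
open Polynomial Finset

private lemma aux_poly {k : Type*} [Field k] [IsAlgClosed k] {p : ℕ} [CharP k p]
    (hp : p.Prime) (a : ℕ → k) (m : ℕ) :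
    ∃ t : k, ∃ x : ℕ → k, x 0 = 1 + a 0 * t ^ p ∧
      (∀ i, x (i + 1) = x i ^ p + a (i + 1) * t ^ p) ∧ x m = t := by
  haveI : Fact p.Prime := ⟨hp⟩
  let q : ℕ → k[X] := fun i => Nat.rec (Polynomial.C 1 + Polynomial.C (a 0) * X ^ p)
      (fun i qi => qi ^ p + Polynomial.C (a (i + 1)) * X ^ p) i
  have hq0 : q 0 = Polynomial.C 1 + Polynomial.C (a 0) * X ^ p := rfl
  have hqs : ∀ i, q (i + 1) = q i ^ p + Polynomial.C (a (i + 1)) * X ^ p := fun i => rfl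
  have hXp : ((X : k[X]) ^ p).coeff 1 = 0 := by
    rw [coeff_X_pow]
    simp [hp.ne_one.symm]
  have hpow : ∀ f : k[X], (f ^ p).coeff 1 = 0 := by
    intro f
    rw [← Polynomial.map_frobenius_expand p f, Polynomial.coeff_map, Polynomial.coeff_expand hp.pos]
    simp [Nat.Prime.one_lt hp, Nat.dvd_one, hp.ne_one]
  have hcoeff : ∀ i, (q i).coeff 1 = 0 := by
    intro i
    induction i with
    | zero => rw [hq0]; simp [hXp, coeff_C, Polynomial.coeff_one]
    | succ i ih => rw [hqs]; simp [hpow, hXp, coeff_C]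
  set P : k[X] := q m - X with hP
  have hP1 : P.coeff 1 = -1 := by
    rw [hP]; simp [hcoeff m]
  have hPdeg : P.degree ≠ 0 := by
    intro h
    have := Polynomial.eq_C_of_degree_le_zero h.le
    rw [this] at hP1
    simp at hP1
  obtain ⟨t, ht⟩ := IsAlgClosed.exists_root P hPdeg
  have hqt : (q m).eval t = t := by
    have h2 : (q m - X).eval t = 0 := ht
    rw [Polynomial.eval_sub, Polynomial.eval_X, sub_eq_zero] at h2
    exact h2
  refine ⟨t, fun i => (q i).eval t, ?_, ?_, hqt⟩
  · show (q 0).eval t = _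
    rw [hq0]; simp
  · intro i
    show (q (i + 1)).eval t = (q i).eval t ^ p + _
    rw [hqs]; simp

/-- Semilinear algebra lemma, part (a): over an algebraically closed field `k` of
characteristic `p > 0`, if `f` is a `k`-linear automorphism of a finite-dimensional
`k`-vector space `V` and `C : V → V` is a Frobenius-semilinear map, then `f - C` is
surjective. -/
theorem stmt0 (k : Type*) [Field k] [IsAlgClosed k] (p : ℕ) [CharP k p] (hp : 0 < p)
    (V : Type*) [AddCommGroup V] [Module k V] [FiniteDimensional k V]
    (f : V →ₗ[k] V) (hf : Function.Bijective f)
    (C : V → V) (Cadd : ∀ x y : V, C (x + y) = C x + C y)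
    (Csmul : ∀ (a : k) (v : V), C (a • v) = a ^ p • C v) :
    Function.Surjective (fun v => f v - C v) := by
  classical
  haveI : NeZero p := ⟨hp.ne'⟩
  have hpp : p.Prime := (CharP.char_is_prime_of_pos k p).out
  intro u
  set g := LinearEquiv.ofBijective f hf with hg
  have hgapp : ∀ v : V, g v = f v := fun v => rfl
  set w := g.symm u with hwdef
  have hgw : g w = u := g.apply_symm_apply u
  have hC0 : C 0 = 0 := by
    have h := Cadd 0 0
    rw [add_zero] at h
    exact left_eq_add.mp h
  set D : V → V := fun v => g.symm (C v) with hD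
  have Dadd : ∀ x y : V, D (x + y) = D x + D y := by
    intro x y; simp only [hD, Cadd, map_add]
  have Dsmul : ∀ (a : k) (v : V), D (a • v) = a ^ p • D v := by
    intro a v; simp only [hD, Csmul, map_smul]
  have hD0 : D 0 = 0 := by rw [hD]; simp [hC0]
  by_cases hw0 : w = 0
  · refine ⟨0, ?_⟩
    simp only [map_zero, hC0, sub_zero]
    rw [← hgw, hw0]
    exact (map_zero g).symm
  set n := Module.finrank k V with hn
  set y : ℕ → V := fun i => D^[i] w with hy
  have hy0 : y 0 = w := rfl
  have hysucc : ∀ i, y (i + 1) = D (y i) := fun i => Function.iterate_succ_apply' D i w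
  -- the vectors y 0, ..., y n are linearly dependent
  have hdep : ¬ LinearIndependent k (fun i : Fin (n + 1) => y (i : ℕ)) := by
    intro h
    have := h.fintype_card_le_finrank
    simp [hn] at this
  obtain ⟨c, hcsum, i0, hi0⟩ := Fintype.not_linearIndependent_iff.mp hdep
  set c' : ℕ → k := fun i => if h : i < n + 1 then c ⟨i, h⟩ else 0 with hc'
  have hc'sum : ∑ i ∈ range (n + 1), c' i • y i = 0 := by
    rw [← Fin.sum_univ_eq_sum_range (fun i => c' i • y i) (n + 1)]
    rw [← hcsum]
    apply Finset.sum_congr rfl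
    intro i _
    simp [hc', i.isLt, Fin.is_le i]
  -- the largest index with nonzero coefficient
  set s : Finset (Fin (n + 1)) := Finset.univ.filter (fun i => c i ≠ 0) with hs
  have hsne : s.Nonempty := ⟨i0, by simp [hs, hi0]⟩
  set M : Fin (n + 1) := s.max' hsne with hM
  have hcM : c M ≠ 0 := by
    have := s.max'_mem hsne
    simp [hs] at this
    exact this
  have hczero : ∀ i : Fin (n + 1), (M : ℕ) < (i : ℕ) → c i = 0 := by
    intro i hi
    by_contra hne
    have : i ∈ s := by simp [hs, hne]
    exact absurd (Fin.lt_def.mpr hi) (not_lt.mpr (s.le_max' i this))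
  have hc'M : c' (M : ℕ) ≠ 0 := by
    simpa [hc', M.isLt, Fin.is_le M] using hcM
  have hc'zero : ∀ i : ℕ, (M : ℕ) < i → c' i = 0 := by
    intro i hi
    by_cases h : i < n + 1
    · simp only [hc', dif_pos h]
      exact hczero ⟨i, h⟩ hi
    · simp [hc', h, show ¬ i ≤ n by omega]
  -- restrict the sum to range (M + 1)
  have hsum2 : ∑ i ∈ range ((M : ℕ) + 1), c' i • y i = 0 := by
    rw [← hc'sum]
    apply Finset.sum_subset
    · exact Finset.range_subset_range.mpr (by omega)
    · intro i _ hni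
      rw [Finset.mem_range, not_lt] at hni
      rw [hc'zero i (by omega), zero_smul]
  -- M ≥ 1
  have hM1 : 1 ≤ (M : ℕ) := by
    by_contra h
    have hM0 : (M : ℕ) = 0 := by omega
    rw [hM0] at hsum2
    simp [hy0] at hsum2
    rcases hsum2 with h1 | h1
    · exact hc'M (by rwa [hM0])
    · exact hw0 h1
  obtain ⟨l, hl⟩ : ∃ l, (M : ℕ) = l + 1 := ⟨(M : ℕ) - 1, by omega⟩
  rw [hl] at hsum2 hc'M
  -- the relation: y (l+1) = ∑ i < l+1, a i • y i
  set a : ℕ → k := fun i => -(c' (l + 1))⁻¹ * c' i with ha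
  have hrel : y (l + 1) = ∑ i ∈ range (l + 1), a i • y i := by
    rw [Finset.sum_range_succ] at hsum2
    have h2 : c' (l + 1) • y (l + 1) = -∑ i ∈ range (l + 1), c' i • y i := by
      rw [eq_neg_iff_add_eq_zero, add_comm]
      exact hsum2
    have h3 : y (l + 1) = (c' (l + 1))⁻¹ • (c' (l + 1) • y (l + 1)) := by
      rw [smul_smul, inv_mul_cancel₀ hc'M, one_smul]
    rw [h3, h2, smul_neg, Finset.smul_sum, ← Finset.sum_neg_distrib]
    apply Finset.sum_congr rfl
    intro i _
    rw [smul_smul, ← neg_smul, ← neg_mul]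
  -- solve the polynomial system
  obtain ⟨t, x, hx0, hxs, hxl⟩ := aux_poly hpp a l
  set v : V := ∑ i ∈ range (l + 1), x i • y i with hv
  have hDv : D v = ∑ i ∈ range (l + 1), (x i) ^ p • y (i + 1) := by
    have hgen : ∀ (m : ℕ), D (∑ i ∈ range m, x i • y i) = ∑ i ∈ range m, (x i) ^ p • y (i + 1) := by
      intro m
      induction m with
      | zero => simpa using hD0
      | succ m ih =>
          rw [Finset.sum_range_succ, Dadd, ih, Dsmul, ← hysucc m, Finset.sum_range_succ]
    exact hgen (l + 1)
  -- the key computation : v - D v = w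
  have hkey : v - D v = w := by
    rw [hDv, Finset.sum_range_succ (fun i => (x i) ^ p • y (i + 1)) l, hrel, hv,
      Finset.sum_range_succ' (fun i => x i • y i) l, hx0, hxl]
    have e1 : ∀ i ∈ range l, x (i + 1) • y (i + 1)
        = (x i) ^ p • y (i + 1) + (t ^ p * a (i + 1)) • y (i + 1) := by
      intro i _
      rw [hxs i, add_smul, mul_comm (a (i + 1)) (t ^ p)]
    rw [Finset.sum_congr rfl e1, Finset.sum_add_distrib, Finset.smul_sum]
    have e2 : ∀ i ∈ range (l + 1), t ^ p • (a i • y i) = (t ^ p * a i) • y i := by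
      intro i _
      rw [smul_smul]
    rw [Finset.sum_congr rfl e2, Finset.sum_range_succ' (fun i => (t ^ p * a i) • y i) l,
      add_smul, one_smul, mul_comm (a 0) (t ^ p), hy0]
    abel
  refine ⟨v, ?_⟩
  have hCv : C v = g (D v) := by rw [hD]; simp
  show f v - C v = u
  rw [← hgapp, hCv, ← map_sub, hkey, hgw]
end

section
/- Let $k$ be an algebraically closed field of characteristic $p > 0$, $V$ a finite-dimensional $k$-vector space of dimension $n$, $f : V \to V$ a $k$-linear bijection, and $C : V \to V$ a bijective Frobenius-semilinear map. Then $\ker(f - C)$ is an $\mathbb{F}_p$-vector space of dimension exactly $n$, and in particular $\ker(f-C)$ has exactly $p^n$ elements. -/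
open Polynomial

section Aux
variable {k : Type*} [Field k] [IsAlgClosed k] {p : ℕ} [CharP k p]

lemma my_deg (hp : p.Prime) (a : k) : ((X : k[X]) ^ p - X - C a).natDegree = p := by
  rw [sub_sub, natDegree_sub_eq_left_of_natDegree_lt, natDegree_X_pow]
  rw [natDegree_X_pow]
  calc (X + C a : k[X]).natDegree ≤ 1 := by
        apply natDegree_add_le_of_degree_le (le_of_eq natDegree_X)
        exact (natDegree_C a).le.trans zero_le_one
    _ < p := hp.one_lt

lemma my_ne_zero (hp : p.Prime) (a : k) : ((X : k[X]) ^ p - X - C a) ≠ 0 := by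
  intro h
  have := my_deg hp a
  rw [h, natDegree_zero] at this
  exact hp.ne_zero this.symm

/-- Artin-Schreier surjectivity. -/
lemma my_AS (hp : p.Prime) (a : k) : ∃ x : k, x ^ p - x = a := by
  have h0 : ((X : k[X]) ^ p - X - C a).degree ≠ 0 := by
    rw [degree_eq_natDegree (my_ne_zero hp a), my_deg hp a]
    exact_mod_cast hp.ne_zero ∘ fun h => Nat.cast_injective h
  obtain ⟨x, hx⟩ := IsAlgClosed.exists_root _ h0
  refine ⟨x, ?_⟩
  have h2 : x ^ p - x - a = 0 := by simpa [IsRoot] using hx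
  exact sub_eq_zero.mp (by linear_combination h2)

/-- The fixed points of Frobenius in `k` biject with `ZMod p`. -/
lemma my_fixed_scalars (hp : p.Prime) :
    ∃ _ : ZMod p ≃ {a : k // a ^ p = a}, True := by
  classical
  haveI : Fact p.Prime := ⟨hp⟩
  let φ := ZMod.castHom (dvd_refl p) k
  have hφ : Function.Injective φ := φ.injective
  have hroot : ∀ i : ZMod p, (φ i) ^ p = φ i := by
    intro i; rw [← map_pow, ZMod.pow_card]
  let ψ : ZMod p → {a : k // a ^ p = a} := fun i => ⟨φ i, hroot i⟩
  have hq : ((X : k[X]) ^ p - X) ≠ 0 := by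
    have := my_ne_zero hp (0 : k)
    simpa using this
  have hbij : Function.Bijective ψ := by
    constructor
    · intro i j hij
      exact hφ (congrArg Subtype.val hij)
    · rintro ⟨a, ha⟩
      set Rf : Finset k := ((X : k[X]) ^ p - X).roots.toFinset with hRf
      set I : Finset k := Finset.image (fun i => φ i) Finset.univ with hI
      have hsub : I ⊆ Rf := by
        intro x hx
        simp only [hI, Finset.mem_image] at hx
        obtain ⟨i, _, rfl⟩ := hx
        rw [hRf, Multiset.mem_toFinset, mem_roots hq]
        simp [IsRoot, hroot i]
      have hdeg' : ((X : k[X]) ^ p - X).natDegree = p := by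
        have := my_deg hp (0 : k); simpa using this
      have hcard : Rf.card ≤ p := by
        calc Rf.card ≤ Multiset.card ((X : k[X]) ^ p - X).roots :=
              Multiset.toFinset_card_le _
          _ ≤ ((X : k[X]) ^ p - X).natDegree := card_roots' _
          _ = p := hdeg'
      have hIcard : I.card = p := by
        rw [hI, Finset.card_image_of_injective _ hφ, Finset.card_univ, ZMod.card]
      have heq : I = Rf := Finset.eq_of_subset_of_card_le hsub (hcard.trans hIcard.ge)
      have haR : a ∈ Rf := by
        rw [hRf, Multiset.mem_toFinset, mem_roots hq]
        simp [IsRoot, ha]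
      rw [← heq, hI, Finset.mem_image] at haR
      obtain ⟨i, _, hi⟩ := haR
      exact ⟨i, Subtype.ext hi⟩
  exact ⟨Equiv.ofBijective ψ hbij, trivial⟩

end Aux


section Core
variable {k : Type*} [Field k] [IsAlgClosed k] {p : ℕ} [CharP k p]
variable {V : Type*} [AddCommGroup V] [Module k V] [FiniteDimensional k V]

omit [IsAlgClosed k] [CharP k p] [FiniteDimensional k V] in
lemma my_snoc_eq (u : ℕ → V) (N : ℕ) :
    (fun i : Fin (N + 1) => u i) = Fin.snoc (fun i : Fin N => u i) (u N) := by
  funext i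
  refine Fin.lastCases ?_ (fun j => ?_) i
  · simp [Fin.snoc_last]
  · simp [Fin.snoc_castSucc]

lemma my_exists_fixed (hp : p.Prime)
    (D : V →+ V) (hD : Function.Bijective D)
    (Dsmul : ∀ (a : k) (v : V), D (a • v) = a ^ p • D v)
    (w : V) (hw : w ≠ 0) : ∃ v : V, v ≠ 0 ∧ D v = v := by
  classical
  set u : ℕ → V := fun i => D^[i] w with hu
  have hu0 : u 0 = w := rfl
  have husucc : ∀ i, u (i + 1) = D (u i) := fun i => Function.iterate_succ_apply' D i w
  have hex : ∃ m, ¬ LinearIndependent k (fun i : Fin (m + 1) => u i) := by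
    refine ⟨Module.finrank k V, fun hli => ?_⟩
    have := hli.fintype_card_le_finrank
    simp at this
  obtain ⟨m, hm, hmin⟩ : ∃ m, (¬ LinearIndependent k (fun i : Fin (m + 1) => u i)) ∧
      ∀ j, j < m → LinearIndependent k (fun i : Fin (j + 1) => u i) :=
    ⟨Nat.find hex, Nat.find_spec hex, fun j hj => not_not.mp (Nat.find_min hex hj)⟩
  rcases m with _ | m'
  · exfalso
    apply hm
    haveI : Unique (Fin (0 + 1)) := ⟨⟨⟨0, by omega⟩⟩, fun a => Fin.ext (by omega)⟩
    refine LinearIndependent.of_subsingleton (0 : Fin (0 + 1)) ?_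
    simpa [hu0] using hw
  have hli : LinearIndependent k (fun i : Fin (m' + 1) => u i) := hmin m' (Nat.lt_succ_self m')
  have hspan : u (m' + 1) ∈ Submodule.span k (Set.range fun i : Fin (m' + 1) => u i) := by
    by_contra hns
    exact hm (by rw [my_snoc_eq u (m' + 1)]; exact linearIndependent_fin_snoc.mpr ⟨hli, hns⟩)
  obtain ⟨b, hb⟩ := Submodule.mem_span_range_iff_exists_fun k |>.mp hspan
  have hb0 : b 0 ≠ 0 := by
    intro h0
    have hsum : u (m' + 1) = ∑ i : Fin m', b i.succ • u i.succ := by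
      rw [← hb, Fin.sum_univ_succ, h0, zero_smul, zero_add]
    choose r hr using fun i : Fin m' => IsAlgClosed.exists_pow_nat_eq (b i.succ) hp.pos
    have hDsum : D (∑ i : Fin m', r i • u i) = D (u m') := by
      rw [map_sum, ← husucc]
      rw [hsum]
      refine Finset.sum_congr rfl fun i _ => ?_
      rw [Dsmul, hr, ← husucc]
      norm_num [Fin.val_succ]
    have h2 : u m' = ∑ i : Fin m', r i • u i := (hD.1 hDsum).symm
    have : u m' ∈ Submodule.span k (Set.range fun i : Fin m' => u i) :=
      Submodule.mem_span_range_iff_exists_fun k |>.mpr ⟨r, h2.symm⟩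
    have hli' := hli
    rw [my_snoc_eq u m'] at hli'
    exact (linearIndependent_fin_snoc.mp hli').2 this
  set b' : ℕ → k := fun i => if h : i < (m' + 1) then b ⟨i, h⟩ else 0 with hb'def
  have hb'eq : ∀ i : Fin (m' + 1), b' i = b i := fun i => by rw [hb'def]; exact dif_pos i.isLt
  have hb'0 : b' 0 ≠ 0 := by rw [show (0 : ℕ) = ((0 : Fin (m' + 1)) : ℕ) from rfl, hb'eq]; exact hb0
  -- the polynomial recursion
  set P : ℕ → k[X] :=
    fun i => Nat.rec (C (b' 0) * X ^ p) (fun i Pi => Pi ^ p + C (b' (i + 1)) * X ^ p) i with hP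
  have hP0 : P 0 = C (b' 0) * X ^ p := rfl
  have hPsucc : ∀ i, P (i + 1) = P i ^ p + C (b' (i + 1)) * X ^ p := fun i => rfl
  haveI : ExpChar k p := ExpChar.prime hp
  have hcpow : ∀ (q : k[X]) (n : ℕ),
      (q ^ p).coeff n = if p ∣ n then (q.coeff (n / p)) ^ p else 0 := by
    intro q n
    rw [← Polynomial.map_frobenius_expand p q, Polynomial.coeff_map, Polynomial.coeff_expand hp.pos]
    split
    · rfl
    · exact map_zero _
  have hplt : ∀ j : ℕ, 2 ≤ j → p < p ^ j := by
    intro j hj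
    calc p = p ^ 1 := (pow_one p).symm
      _ < p ^ j := Nat.pow_lt_pow_right hp.one_lt (by omega)
  have hPprop : ∀ i, (P i).coeff (p ^ (i + 1)) = (b' 0) ^ (p ^ i) ∧
      (P i).natDegree ≤ p ^ (i + 1) ∧ (P i).coeff 1 = 0 ∧ (P i).coeff 0 = 0 := by
    intro i
    induction i with
    | zero =>
      refine ⟨?_, ?_, ?_, ?_⟩
      · simp [hP0, coeff_C_mul, coeff_X_pow]
      · calc (P 0).natDegree ≤ (X ^ p : k[X]).natDegree := by
              rw [hP0]; exact natDegree_C_mul_le _ _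
          _ ≤ p ^ 1 := by simp
      · simp [hP0, coeff_C_mul, coeff_X_pow, hp.one_lt.ne]
      · simp [hP0, coeff_C_mul, coeff_X_pow, hp.ne_zero, Ne.symm hp.ne_zero]
    | succ i ih =>
      obtain ⟨ih1, ih2, ih3, ih4⟩ := ih
      have hC1 : ∀ n, n ≠ p → (C (b' (i + 1)) * X ^ p : k[X]).coeff n = 0 := by
        intro n hn; simp [coeff_C_mul, coeff_X_pow, hn]
      refine ⟨?_, ?_, ?_, ?_⟩
      · rw [hPsucc, coeff_add, hcpow,
          if_pos (dvd_pow_self p (by omega : i + 1 + 1 ≠ 0)),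
          show p ^ (i + 1 + 1) / p = p ^ (i + 1) by
            rw [pow_succ]; exact Nat.mul_div_cancel _ hp.pos,
          ih1, ← pow_mul, ← pow_succ,
          hC1 (p ^ (i + 1 + 1)) (hplt (i + 1 + 1) (by omega)).ne', add_zero]
      · rw [hPsucc]
        refine (natDegree_add_le _ _).trans (max_le ?_ ?_)
        · calc (P i ^ p).natDegree = p * (P i).natDegree := natDegree_pow _ _
            _ ≤ p * p ^ (i + 1) := Nat.mul_le_mul_left p ih2
            _ = p ^ (i + 1 + 1) := (pow_succ p (i + 1)).symm ▸ (mul_comm _ _)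
        · calc (C (b' (i + 1)) * X ^ p : k[X]).natDegree ≤ (X ^ p : k[X]).natDegree :=
              natDegree_C_mul_le _ _
            _ ≤ p ^ (i + 1 + 1) := by
              rw [natDegree_X_pow]; exact (hplt (i + 1 + 1) (by omega)).le
      · rw [hPsucc, coeff_add, hcpow,
          if_neg (by simpa using hp.one_lt.ne'), hC1 1 hp.one_lt.ne, add_zero]
      · rw [hPsucc, coeff_add, hcpow, if_pos (dvd_zero p), Nat.zero_div, ih4,
          zero_pow hp.ne_zero, hC1 0 hp.ne_zero.symm, add_zero]
  obtain ⟨hQ1, hQ2, hQ3, hQ4⟩ := hPprop m'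
  set Q : k[X] := P m' - X with hQdef
  have hQc : Q.coeff (p ^ (m' + 1)) ≠ 0 := by
    have hpM1 : (1 : ℕ) < p ^ (m' + 1) := Nat.one_lt_pow (by omega) hp.one_lt
    have hx : (X : k[X]).coeff (p ^ (m' + 1)) = 0 := by
      rw [coeff_X, if_neg (by omega)]
    rw [hQdef, coeff_sub, hx, sub_zero, hQ1]
    exact pow_ne_zero _ hb'0
  have hQ0 : Q.coeff 0 = 0 := by
    rw [hQdef, coeff_sub, hQ4, coeff_X, if_neg (by omega)]
    ring
  have hQ1' : Q.coeff 1 = -1 := by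
    rw [hQdef, coeff_sub, hQ3, coeff_X, if_pos rfl]
    ring
  obtain ⟨R, hR⟩ : (X : k[X]) ∣ Q := X_dvd_iff.mpr hQ0
  have hR0 : R.coeff 0 = -1 := by
    have := congrArg (fun q => coeff q 1) hR
    simpa [coeff_X_mul] using this.symm.trans hQ1'
  have hRne : R ≠ 0 := fun h => by simp [h] at hR0
  have hQne : Q ≠ 0 := fun h => hQc (by rw [h]; simp)
  have hRdeg : R.degree ≠ 0 := by
    intro hdeg
    -- then R is a nonzero constant, Q = c • X has degree 1, but coeff at p^(m' + 1) ≠ 0 with p^(m' + 1) ≥ 2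
    have h2 : 2 ≤ p ^ (m' + 1) := by
      calc 2 ≤ p := hp.two_le
        _ ≤ p ^ (m' + 1) := Nat.le_self_pow (by omega) p
    have : p ^ (m' + 1) ≤ Q.natDegree := le_natDegree_of_ne_zero hQc
    have hQdeg : Q.natDegree = 1 + R.natDegree := by
      rw [hR, natDegree_mul X_ne_zero hRne, natDegree_X]
    have hr0 : R.natDegree = 0 := natDegree_eq_zero_iff_degree_le_zero.mpr (le_of_eq hdeg)
    omega
  obtain ⟨t, ht⟩ := IsAlgClosed.exists_root R hRdeg
  have htne : t ≠ 0 := by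
    intro h0
    rw [h0] at ht
    have : R.coeff 0 = 0 := by simpa [IsRoot, ← coeff_zero_eq_eval_zero] using ht
    rw [hR0] at this
    exact one_ne_zero (neg_injective (this.trans neg_zero.symm))
  have hPt : (P m').eval t = t := by
    have hQt : Q.eval t = 0 := by rw [hR, eval_mul, ht.eq_zero, mul_zero]
    have := hQt
    rw [hQdef, eval_sub, eval_X, sub_eq_zero] at this
    exact this
  -- the coefficients
  set c : ℕ → k := fun i => (P i).eval t with hc
  have hc0 : c 0 = t ^ p * b' 0 := by
    rw [hc]; simp [hP0]; ring
  have hcs : ∀ i, c (i + 1) = c i ^ p + t ^ p * b' (i + 1) := by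
    intro i
    rw [hc]
    simp only [hPsucc, eval_add, eval_pow, eval_mul, eval_C, eval_X]
    ring
  have hcm : c m' = t := hPt
  have hb'sum : ∑ i ∈ Finset.range (m' + 1), b' i • u i = u (m' + 1) := by
    rw [← Fin.sum_univ_eq_sum_range (fun j => b' j • u j) (m' + 1), ← hb]
    exact Finset.sum_congr rfl fun i _ => by rw [hb'eq]
  -- the fixed vector
  set v : V := ∑ i ∈ Finset.range (m' + 1), c i • u i with hv
  have hvfin : v = ∑ i : Fin (m' + 1), c i • u i :=
    (Fin.sum_univ_eq_sum_range (fun j => c j • u j) (m' + 1)).symm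
  have hvne : v ≠ 0 := by
    intro h0
    have := Fintype.linearIndependent_iff.mp hli (fun i => c i)
      (by rw [← hvfin, h0]) ⟨m', Nat.lt_succ_self m'⟩
    exact htne (by rw [← hcm]; exact this)
  refine ⟨v, hvne, ?_⟩
  calc D v = ∑ i ∈ Finset.range (m' + 1), (c i ^ p) • u (i + 1) := by
        rw [hv, map_sum]
        exact Finset.sum_congr rfl fun i _ => by rw [Dsmul, ← husucc]
    _ = (∑ i ∈ Finset.range m', (c i ^ p) • u (i + 1)) + (c m' ^ p) • u (m' + 1) :=
        Finset.sum_range_succ _ _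
    _ = (∑ i ∈ Finset.range m', (c i ^ p) • u (i + 1))
        + ∑ i ∈ Finset.range (m' + 1), (t ^ p * b' i) • u i := by
        congr 1
        rw [hcm, ← hb'sum, Finset.smul_sum]
        exact Finset.sum_congr rfl fun i _ => by rw [smul_smul]
    _ = (∑ i ∈ Finset.range m', (c i ^ p) • u (i + 1))
        + ((∑ i ∈ Finset.range m', (t ^ p * b' (i + 1)) • u (i + 1)) + (t ^ p * b' 0) • u 0) := by
        congr 1
        exact Finset.sum_range_succ' _ _
    _ = ((t ^ p * b' 0) • u 0 + ∑ i ∈ Finset.range m', (c i ^ p + t ^ p * b' (i + 1)) • u (i + 1)) := by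
        simp only [add_smul]
        rw [Finset.sum_add_distrib]
        abel
    _ = c 0 • u 0 + ∑ i ∈ Finset.range m', c (i + 1) • u (i + 1) := by
        rw [hc0]
        congr 1
        exact Finset.sum_congr rfl fun i _ => by rw [hcs]
    _ = v := by
        rw [hv, Finset.sum_range_succ' (fun i => c i • u i) m']
        abel

end Core


section Span
variable {k : Type*} [Field k] [IsAlgClosed k] {p : ℕ} [CharP k p]
variable {V : Type*} [AddCommGroup V] [Module k V] [FiniteDimensional k V]

lemma my_span_fixed (hp : p.Prime) (D : V →+ V) (hD : Function.Bijective D)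
    (Dsmul : ∀ (a : k) (v : V), D (a • v) = a ^ p • D v) :
    Submodule.span k {v : V | D v = v} = ⊤ := by
  classical
  by_contra hWtop
  set S : Set V := {v : V | D v = v} with hS
  set W : Submodule k V := Submodule.span k S with hW
  -- D maps W to W
  have hDW : ∀ v ∈ W, D v ∈ W := by
    intro v hv
    refine Submodule.span_induction ?_ ?_ ?_ ?_ hv
    · intro x hx
      rw [show D x = x from hx]
      exact Submodule.subset_span hx
    · rw [map_zero]; exact W.zero_mem
    · intro x y _ _ hx hy
      rw [map_add]; exact W.add_mem hx hy
    · intro a x _ hx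
      rw [Dsmul]; exact W.smul_mem _ hx
  -- W ⊆ D(W)
  have hWD : ∀ v ∈ W, ∃ w ∈ W, D w = v := by
    intro v hv
    refine Submodule.span_induction ?_ ?_ ?_ ?_ hv
    · intro x hx
      exact ⟨x, Submodule.subset_span hx, hx⟩
    · exact ⟨0, W.zero_mem, map_zero D⟩
    · rintro x y _ _ ⟨x', hx', hxe⟩ ⟨y', hy', hye⟩
      exact ⟨x' + y', W.add_mem hx' hy', by rw [map_add, hxe, hye]⟩
    · rintro a x _ ⟨x', hx', hxe⟩
      obtain ⟨r, hr⟩ := IsAlgClosed.exists_pow_nat_eq a hp.pos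
      exact ⟨r • x', W.smul_mem _ hx', by rw [Dsmul, hr, hxe]⟩
  -- (D - id) surjective on W
  have hASW : ∀ z ∈ W, ∃ w ∈ W, D w - w = z := by
    intro z hz
    rw [hW, hS] at hz
    obtain ⟨n, cf, g, hsum⟩ := Submodule.mem_span_set'.mp hz
    choose r hr using fun i : Fin n => my_AS (k := k) hp (cf i)
    refine ⟨∑ i : Fin n, r i • (g i : V), ?_, ?_⟩
    · exact Submodule.sum_mem _ fun i _ =>
        Submodule.smul_mem _ _ (Submodule.subset_span (g i).2)
    · rw [map_sum, ← hsum, ← Finset.sum_sub_distrib]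
      refine Finset.sum_congr rfl fun i _ => ?_
      have hfix : D (g i : V) = (g i : V) := (g i).2
      rw [Dsmul, hfix, ← sub_smul, hr]
  -- quotient
  have hlt : W < ⊤ := lt_top_iff_ne_top.mpr hWtop
  haveI : Nontrivial (V ⧸ W) := Submodule.Quotient.nontrivial_iff.mpr hlt.ne
  set mkq : V → V ⧸ W := Submodule.Quotient.mk with hmkq
  have hmk_out : ∀ x : V ⧸ W, mkq x.out = x := fun x => Quotient.out_eq' x
  have hmk_surj : Function.Surjective mkq := Submodule.Quotient.mk_surjective W
  have hmk_eq : ∀ a b : V, mkq a = mkq b ↔ a - b ∈ W := fun a b => Submodule.Quotient.eq W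
  set Dq0 : V ⧸ W → V ⧸ W := fun x => mkq (D x.out) with hDq0
  have hDqmk : ∀ v : V, Dq0 (mkq v) = mkq (D v) := by
    intro v
    rw [hDq0]
    simp only
    rw [hmk_eq, ← map_sub]
    apply hDW
    rw [← hmk_eq]
    exact hmk_out (mkq v)
  have hadd : ∀ x y : V ⧸ W, Dq0 (x + y) = Dq0 x + Dq0 y := by
    intro x y
    obtain ⟨a, rfl⟩ := hmk_surj x
    obtain ⟨b, rfl⟩ := hmk_surj y
    rw [← Submodule.Quotient.mk_add, show Submodule.Quotient.mk (a+b) = mkq (a+b) from rfl,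
      hDqmk, hDqmk, hDqmk, map_add]
    exact Submodule.Quotient.mk_add W ..
  set Dq : V ⧸ W →+ V ⧸ W := AddMonoidHom.mk' Dq0 hadd with hDq
  have hDqapp : ∀ v : V, Dq (mkq v) = mkq (D v) := hDqmk
  have hDqsmul : ∀ (a : k) (x : V ⧸ W), Dq (a • x) = a ^ p • Dq x := by
    intro a x
    obtain ⟨v, rfl⟩ := hmk_surj x
    rw [show a • mkq v = mkq (a • v) from rfl, hDqapp, hDqapp, Dsmul]
    rfl
  have hDqbij : Function.Bijective Dq := by
    constructor
    · intro x y hxy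
      obtain ⟨a, rfl⟩ := hmk_surj x
      obtain ⟨b, rfl⟩ := hmk_surj y
      rw [hDqapp, hDqapp, hmk_eq, ← map_sub] at hxy
      obtain ⟨w', hw', hwe⟩ := hWD _ hxy
      rw [hmk_eq]
      rwa [← hD.1 hwe]
    · intro x
      obtain ⟨v, rfl⟩ := hmk_surj x
      obtain ⟨v', hv'⟩ := hD.2 v
      exact ⟨mkq v', by rw [hDqapp, hv']⟩
  -- get a nonzero fixed vector in the quotient
  obtain ⟨x0, hx0⟩ := exists_ne (0 : V ⧸ W)
  obtain ⟨x, hxne, hxfix⟩ := my_exists_fixed (k := k) hp Dq hDqbij hDqsmul x0 hx0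
  obtain ⟨v, rfl⟩ := hmk_surj x
  have hvW : v ∉ W := by
    intro h
    exact hxne ((Submodule.Quotient.mk_eq_zero W).mpr h)
  have hdvW : D v - v ∈ W := by
    rw [← hmk_eq, ← hDqapp v]
    exact hxfix
  obtain ⟨w', hw', hwe⟩ := hASW _ hdvW
  have hfix : D (v - w') = v - w' := by
    rw [map_sub, sub_eq_sub_iff_sub_eq_sub]
    exact hwe.symm
  have : v - w' ∈ W := Submodule.subset_span (hfix : (v - w') ∈ S)
  exact hvW (by simpa using W.add_mem this hw')

end Span

/-- In the setting of the semilinear algebra lemma with `C` bijective, `ker (f - C)` is an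
`𝔽_p`-vector space of dimension `n = dim_k V`; in particular it has exactly `p ^ n`
elements. -/

theorem stmt3 (k : Type*) [Field k] [IsAlgClosed k] (p : ℕ) [CharP k p] (hp : 0 < p)
    (V : Type*) [AddCommGroup V] [Module k V] [FiniteDimensional k V]
    (f : V →ₗ[k] V) (hf : Function.Bijective f)
    (C : V → V) (hC : Function.Bijective C)
    (Cadd : ∀ x y : V, C (x + y) = C x + C y)
    (Csmul : ∀ (a : k) (v : V), C (a • v) = a ^ p • C v) :
    Nat.card {v : V // f v - C v = 0} = p ^ (Module.finrank k V) := by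
  classical
  haveI : NeZero p := ⟨hp.ne'⟩
  have hprime : p.Prime := (CharP.char_is_prime_of_pos k p).out
  -- build the semilinear map D = f⁻¹ ∘ C
  set g : V ≃ₗ[k] V := LinearEquiv.ofBijective f hf with hg
  have hgapp : ∀ v, g v = f v := fun v => rfl
  set D0 : V → V := fun v => g.symm (C v) with hD0
  have Dadd : ∀ x y, D0 (x + y) = D0 x + D0 y := by
    intro x y; rw [hD0]; simp only [Cadd, map_add]
  set D : V →+ V := AddMonoidHom.mk' D0 Dadd with hD
  have Dsmul : ∀ (a : k) (v : V), D (a • v) = a ^ p • D v := by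
    intro a v
    show D0 (a • v) = a ^ p • D0 v
    rw [hD0]; simp only [Csmul, map_smul]
  have hDbij : Function.Bijective D :=
    (g.symm.bijective).comp hC
  -- the subtype equivalence
  have hiff : ∀ v : V, (f v - C v = 0) ↔ D v = v := by
    intro v
    rw [sub_eq_zero]
    constructor
    · intro h
      show g.symm (C v) = v
      rw [← h, ← hgapp, g.symm_apply_apply]
    · intro h
      have h2 : g (g.symm (C v)) = g v := congrArg g h
      rw [g.apply_symm_apply] at h2
      rw [← hgapp, h2]
  have e1 : {v : V // f v - C v = 0} ≃ {v : V // D v = v} :=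
    Equiv.subtypeEquivRight hiff
  -- basis of fixed vectors
  set S : Set V := {v : V | D v = v} with hS
  have hspan : Submodule.span k S = ⊤ := my_span_fixed hprime D hDbij Dsmul
  obtain ⟨B, hBS, -, hBsp, hBli⟩ :=
    exists_linearIndepOn_id_extension (linearIndependent_empty k V) (Set.empty_subset S)
  have hBtop : ⊤ ≤ Submodule.span k (Set.range ((↑) : B → V)) := by
    rw [Subtype.range_coe, ← hspan]
    exact Submodule.span_le.mpr hBsp
  set bB : Module.Basis B k V := Module.Basis.mk (@id (LinearIndependent k ((↑) : B → V)) hBli) hBtop with hbB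
  haveI : Fintype B := FiniteDimensional.fintypeBasisIndex bB
  have hBcard : Module.finrank k V = Fintype.card B := Module.finrank_eq_card_basis bB
  have hBfix : ∀ i : B, D (bB i) = bB i := by
    intro i
    rw [hbB, Module.Basis.mk_apply]
    exact hBS i.2
  obtain ⟨eZ, -⟩ := my_fixed_scalars (k := k) (p := p) hprime
  set Φ : (B → {a : k // a ^ p = a}) → {v : V // D v = v} := fun a =>
    ⟨∑ i : B, (a i : k) • bB i, by
      rw [map_sum]
      refine Finset.sum_congr rfl fun i _ => ?_
      rw [Dsmul, hBfix i, (a i).2]⟩ with hΦdef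
  have hΦ : Function.Bijective Φ := by
    constructor
    · intro a a' haa
      have hsum : ∑ i : B, ((a i : k) - (a' i : k)) • bB i = 0 := by
        simp only [sub_smul]
        rw [Finset.sum_sub_distrib]
        have : (∑ i : B, (a i : k) • bB i) = ∑ i : B, (a' i : k) • bB i :=
          congrArg Subtype.val haa
        rw [this, sub_self]
      have hz := Fintype.linearIndependent_iff.mp bB.linearIndependent _ hsum
      funext i
      exact Subtype.ext (sub_eq_zero.mp (hz i))
    · rintro ⟨v, hv⟩
      set r : B → k := fun i => bB.repr v i with hr
      have hrep : ∑ i : B, r i • bB i = v := bB.sum_repr v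
      have hDv : ∑ i : B, (r i ^ p) • bB i = v := by
        conv_rhs => rw [← hv]
        rw [← hrep, map_sum]
        refine Finset.sum_congr rfl fun i _ => ?_
        rw [Dsmul, hBfix i]
      have hsum : ∑ i : B, (r i ^ p - r i) • bB i = 0 := by
        simp only [sub_smul]
        rw [Finset.sum_sub_distrib, hDv, hrep, sub_self]
      have hz := Fintype.linearIndependent_iff.mp bB.linearIndependent _ hsum
      refine ⟨fun i => ⟨r i, sub_eq_zero.mp (hz i)⟩, ?_⟩
      exact Subtype.ext hrep
  have e2 : {v : V // D v = v} ≃ (B → {a : k // a ^ p = a}) := (Equiv.ofBijective Φ hΦ).symm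
  have e3 : (B → {a : k // a ^ p = a}) ≃ (B → ZMod p) :=
    Equiv.arrowCongr (Equiv.refl B) eZ.symm
  rw [Nat.card_congr ((e1.trans e2).trans e3), Nat.card_eq_fintype_card,
    Fintype.card_fun, ZMod.card, hBcard]
end

section
/- Let $k$ be an algebraically closed field of characteristic $p$, $V$ a finite-dimensional $k$-vector space, $i : V \to V$ an injective $k$-linear map and $C : V \to V$ a surjective Frobenius-semilinear map. Then the additive map $i - C : V \to V$ is surjective and its kernel is finite of cardinality $p^{\dim_k V}$. -/
open Polynomial Finset Submodule

set_option linter.unusedSectionVars false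
set_option linter.unusedVariables false

section LangLemmas
variable {k : Type*} [Field k] [IsAlgClosed k] {p : ℕ} [CharP k p]
variable {V : Type*} [AddCommGroup V] [Module k V]

omit [CharP k p] in
lemma AS_root (hp : p.Prime) (a : k) : ∃ r : k, r ^ p - r = a := by
  have h1 : (X + C a : k[X]).degree < (X ^ p : k[X]).degree := by
    rw [degree_X_add_C, degree_X_pow]
    exact_mod_cast hp.one_lt
  obtain ⟨t, ht⟩ := IsAlgClosed.exists_root (X ^ p - (X + C a))
    (by rw [degree_sub_eq_left_of_degree_lt h1, degree_X_pow]; exact_mod_cast hp.pos.ne')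
  refine ⟨t, ?_⟩
  have h2 : t ^ p - (t + a) = 0 := by
    have := ht
    simpa only [IsRoot, eval_sub, eval_add, eval_pow, eval_X, eval_C] using this
  linear_combination h2

lemma poly_system (hp : p.Prime) (b : ℕ → k) (hb0 : b 0 ≠ 0) (m : ℕ) (hm : 1 ≤ m) :
    ∃ c : ℕ → k, c (m - 1) ≠ 0 ∧ c 0 = b 0 * c (m-1) ^ p ∧
      ∀ j, c (j + 1) = c j ^ p + b (j + 1) * c (m-1) ^ p := by
  have hp2 : 2 ≤ p := hp.two_le
  set W : ℕ → k[X] := fun j => Nat.rec (C (b 0))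
    (fun j Wj => X ^ (p * (p - 1)) * Wj ^ p + C (b (j + 1))) j with hW
  have hW0 : W 0 = C (b 0) := rfl
  have hWs : ∀ j, W (j + 1) = X ^ (p * (p - 1)) * W j ^ p + C (b (j + 1)) := fun j => rfl
  have hWne : ∀ j, W j ≠ 0 := by
    intro j
    induction j with
    | zero => simpa [hW0] using hb0
    | succ j ih =>
        rw [hWs]
        intro h
        have h2 : X ^ (p * (p - 1)) * W j ^ p = - C (b (j+1)) := by linear_combination h
        have hdeg : (X ^ (p * (p - 1)) * W j ^ p : k[X]).natDegree = 0 := by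
          rw [h2, natDegree_neg, natDegree_C]
        rw [natDegree_mul (pow_ne_zero _ X_ne_zero) (pow_ne_zero _ ih),
          natDegree_X_pow] at hdeg
        have : 0 < p * (p - 1) := Nat.mul_pos hp.pos (by omega)
        omega
  set P : ℕ → k[X] := fun j => X ^ p * W j with hP
  set R : k[X] := X ^ (p - 1) * W (m - 1) - C 1 with hR
  have hRdeg : R.degree ≠ 0 := by
    have h1 : R.natDegree = (X ^ (p - 1) * W (m - 1) : k[X]).natDegree := natDegree_sub_C
    rw [natDegree_mul (pow_ne_zero _ X_ne_zero) (hWne _), natDegree_X_pow] at h1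
    have hRnd : 0 < R.natDegree := by omega
    exact ne_of_gt (natDegree_pos_iff_degree_pos.mp hRnd)
  obtain ⟨t, ht⟩ := IsAlgClosed.exists_root R hRdeg
  have htval : t ^ (p - 1) * (W (m-1)).eval t = 1 := by
    have h2 : t ^ (p-1) * (W (m-1)).eval t - 1 = 0 := by
      have := ht
      simpa only [hR, IsRoot, eval_sub, eval_mul, eval_pow, eval_X, eval_C] using this
    linear_combination h2
  have ht0 : t ≠ 0 := by
    rintro rfl
    rw [zero_pow (by omega : p - 1 ≠ 0), zero_mul] at htval
    exact one_ne_zero htval.symm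
  have hPev : (P (m-1)).eval t = t := by
    simp only [hP, eval_mul, eval_pow, eval_X]
    calc t ^ p * (W (m-1)).eval t = t * (t ^ (p-1) * (W (m-1)).eval t) := by
          rw [← mul_assoc, ← pow_succ']
          congr 2
          omega
      _ = t := by rw [htval, mul_one]
  have hexp : p + p * (p - 1) = p * p := by
    have h1 : p - 1 + 1 = p := by omega
    calc p + p * (p-1) = p * ((p-1) + 1) := by ring
      _ = p * p := by rw [h1]
  refine ⟨fun j => (P j).eval t, ?_, ?_, ?_⟩
  · show (P (m-1)).eval t ≠ 0
    rw [hPev]; exact ht0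
  · show (P 0).eval t = b 0 * ((P (m-1)).eval t) ^ p
    rw [hPev]
    simp only [hP, hW0, eval_mul, eval_pow, eval_X, eval_C]
    ring
  · intro j
    show (P (j+1)).eval t = ((P j).eval t) ^ p + b (j+1) * ((P (m-1)).eval t) ^ p
    rw [hPev]
    simp only [hP, hWs, eval_mul, eval_add, eval_pow, eval_X, eval_C]
    have hsplit : t ^ p * (t ^ (p * (p-1)) * ((W j).eval t) ^ p)
        = (t ^ p * (W j).eval t) ^ p := by
      rw [mul_pow, ← pow_mul, ← mul_assoc, ← pow_add, hexp]
    rw [mul_add, hsplit]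
    ring

lemma exists_fixed [FiniteDimensional k V] (hp : p.Prime)
    (ψ : V → V) (hadd : ∀ x y, ψ (x + y) = ψ x + ψ y)
    (hsmul : ∀ (a : k) (v : V), ψ (a • v) = a ^ p • ψ v)
    (hinj : Function.Injective ψ)
    (u : V) (hu : u ≠ 0) : ∃ v : V, v ≠ 0 ∧ ψ v = v := by
  classical
  set Ψ : V →+ V := AddMonoidHom.mk' ψ hadd with hΨ
  have hpsisum : ∀ (s : Finset ℕ) (f : ℕ → V), ψ (∑ j ∈ s, f j) = ∑ j ∈ s, ψ (f j) :=
    fun s f => map_sum Ψ f s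
  set e : ℕ → V := fun j => ψ^[j] u with hedef
  have he : ∀ j, e (j + 1) = ψ (e j) := fun j => Function.iterate_succ_apply' ψ j u
  have he0 : e 0 = u := rfl
  have hDex : ∃ n, ¬ LinearIndependent k (fun j : Fin n => e ↑j) := by
    refine ⟨Module.finrank k V + 1, fun h => ?_⟩
    have := h.fintype_card_le_finrank
    simp only [Fintype.card_fin] at this
    omega
  set N := Nat.find hDex with hNdef
  have hN : ¬ LinearIndependent k (fun j : Fin N => e ↑j) := Nat.find_spec hDex
  have hmin : ∀ n, n < N → LinearIndependent k (fun j : Fin n => e ↑j) :=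
    fun n hn => not_not.mp (Nat.find_min hDex hn)
  have h0 : LinearIndependent k (fun j : Fin 0 => e ↑j) := linearIndependent_empty_type
  have h1 : LinearIndependent k (fun j : Fin 1 => e ↑j) := by
    apply linearIndependent_unique_iff.mpr
    simpa [he0] using hu
  have hN2 : 2 ≤ N := by
    rcases Nat.lt_or_ge N 2 with h | h
    · interval_cases N
      · exact absurd h0 hN
      · exact absurd h1 hN
    · exact h
  obtain ⟨m', hm'⟩ : ∃ m', N - 1 = m' + 1 := ⟨N - 2, by omega⟩
  set m : ℕ := m' + 1 with hmdef
  have hmN : m + 1 = N := by omega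
  have hindep : LinearIndependent k (fun j : Fin m => e ↑j) := hmin m (by omega)
  have hdepN : ¬ LinearIndependent k (fun j : Fin (m + 1) => e ↑j) := by
    rw [hmN]; exact hN
  have hsnoc : (fun j : Fin (m+1) => e ↑j) = Fin.snoc (fun j : Fin m => e ↑j) (e m) := by
    funext j
    refine Fin.lastCases ?_ ?_ j
    · simp
    · intro i; simp
  have hmem : e m ∈ span k (Set.range fun j : Fin m => e ↑j) := by
    by_contra hmem
    exact hdepN (hsnoc ▸ linearIndependent_fin_snoc.mpr ⟨hindep, hmem⟩)
  obtain ⟨a, ha⟩ := (mem_span_range_iff_exists_fun k).mp hmem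
  set b : ℕ → k := fun j => if h : j < m then a ⟨j, h⟩ else 0 with hbdef
  have hbe : ∑ j ∈ range m, b j • e j = e m := by
    rw [← Fin.sum_univ_eq_sum_range (fun j => b j • e j) m, ← ha]
    refine Finset.sum_congr rfl fun i _ => ?_
    congr 1
    simp [hbdef, i.isLt]
  -- b 0 ≠ 0
  have hb0 : b 0 ≠ 0 := by
    intro hb0'
    have hroot : ∀ j, ∃ r : k, r ^ p = b j :=
      fun j => IsAlgClosed.exists_pow_nat_eq (b j) hp.pos
    choose σb hσ using hroot
    have hkey : e m = ψ (∑ j ∈ range m', σb (j+1) • e j) := by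
      calc e m = ∑ j ∈ range (m' + 1), b j • e j := hbe.symm
        _ = (∑ j ∈ range m', b (j+1) • e (j+1)) + b 0 • e 0 :=
            Finset.sum_range_succ' (fun j => b j • e j) m'
        _ = ∑ j ∈ range m', b (j+1) • e (j+1) := by rw [hb0', zero_smul, add_zero]
        _ = ∑ j ∈ range m', ψ (σb (j+1) • e j) := by
            refine Finset.sum_congr rfl fun j _ => ?_
            rw [hsmul, hσ, he]
        _ = ψ (∑ j ∈ range m', σb (j+1) • e j) := (hpsisum _ _).symm
    have h2 : e m' = ∑ j ∈ range m', σb (j+1) • e j := by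
      apply hinj
      rw [← he m']
      exact hkey
    set gn : ℕ → k := fun j => if j < m' then σb (j+1) else -1 with hgn
    have hgsum : ∑ j : Fin m, gn ↑j • e ↑j = 0 := by
      rw [Fin.sum_univ_eq_sum_range (fun j => gn j • e j) m, Finset.sum_range_succ]
      have : ∑ j ∈ range m', gn j • e j = ∑ j ∈ range m', σb (j+1) • e j := by
        refine Finset.sum_congr rfl fun j hj => ?_
        rw [Finset.mem_range] at hj
        simp [hgn, hj]
      rw [this, ← h2]
      simp [hgn]
    have := Fintype.linearIndependent_iff.mp hindep (fun j => gn ↑j) hgsum ⟨m', by omega⟩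
    simp [hgn] at this
  -- main construction
  obtain ⟨c, hcne, hc0, hcs⟩ := poly_system hp b hb0 m (by omega)
  have hm1 : m - 1 = m' := rfl
  rw [hm1] at hcne hc0 hcs
  set v' : V := ∑ j ∈ range m, c j • e j with hv'
  have hterm : ∀ j ∈ range m', (c j)^p • e (j+1) + (c m' ^ p * b (j+1)) • e (j+1)
      = c (j+1) • e (j+1) := by
    intro j _
    rw [← add_smul]
    congr 1
    rw [hcs j]
    ring
  have hterm0 : (c m' ^ p * b 0) • e 0 = c 0 • e 0 := by
    congr 1
    rw [hc0]
    ring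
  have hfix : ψ v' = v' := by
    have h1 : ψ v' = ∑ j ∈ range (m'+1), (c j)^p • e (j+1) := by
      rw [hv', hpsisum]
      exact Finset.sum_congr rfl fun j _ => by rw [hsmul, he]
    have h2 : (c m')^p • e (m'+1) = ∑ j ∈ range (m'+1), (c m' ^ p * b j) • e j := by
      have : e (m' + 1) = ∑ j ∈ range (m'+1), b j • e j := hbe.symm
      rw [this, Finset.smul_sum]
      exact Finset.sum_congr rfl fun j _ => (smul_smul _ _ _)
    calc ψ v' = (∑ j ∈ range m', (c j)^p • e (j+1)) + (c m')^p • e (m'+1) := by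
          rw [h1, Finset.sum_range_succ]
      _ = (∑ j ∈ range m', (c j)^p • e (j+1)) +
          ((∑ j ∈ range m', (c m' ^ p * b (j+1)) • e (j+1)) + (c m' ^ p * b 0) • e 0) := by
          rw [h2, Finset.sum_range_succ' (fun j => (c m' ^ p * b j) • e j) m']
      _ = (∑ j ∈ range m', ((c j)^p • e (j+1) + (c m' ^ p * b (j+1)) • e (j+1)))
          + (c m' ^ p * b 0) • e 0 := by
          rw [← add_assoc, ← Finset.sum_add_distrib]
      _ = (∑ j ∈ range m', c (j+1) • e (j+1)) + c 0 • e 0 := by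
          rw [Finset.sum_congr rfl hterm, hterm0]
      _ = ∑ j ∈ range (m'+1), c j • e j :=
          (Finset.sum_range_succ' (fun j => c j • e j) m').symm
      _ = v' := rfl
  refine ⟨v', ?_, hfix⟩
  intro hv0
  have hsum : ∑ j : Fin m, c ↑j • e ↑j = 0 := by
    rw [Fin.sum_univ_eq_sum_range (fun j => c j • e j) m, ← hv', hv0]
  have := Fintype.linearIndependent_iff.mp hindep (fun j => c ↑j) hsum ⟨m', by omega⟩
  exact hcne this

lemma span_fixed [FiniteDimensional k V] (hp : p.Prime)
    (ψ : V → V) (hadd : ∀ x y, ψ (x + y) = ψ x + ψ y)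
    (hsmul : ∀ (a : k) (v : V), ψ (a • v) = a ^ p • ψ v)
    (hinj : Function.Injective ψ) :
    span k {v : V | ψ v = v} = ⊤ := by
  classical
  set Ψ : V →+ V := AddMonoidHom.mk' ψ hadd with hΨ
  have hψeq : ∀ v, Ψ v = ψ v := fun _ => rfl
  set F : Set V := {v : V | ψ v = v} with hF
  set W : Submodule k V := span k F with hWdef
  -- ψ maps W into W
  have hWψ : ∀ v ∈ W, ψ v ∈ W := by
    intro v hv
    induction hv using Submodule.span_induction with
    | mem x hx =>
        have hx' : ψ x = x := hx
        rw [hx']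
        exact subset_span hx
    | zero => rw [← hψeq, map_zero]; exact zero_mem W
    | add x y hx hy ihx ihy => rw [hadd]; exact add_mem ihx ihy
    | smul a x hx ih => rw [hsmul]; exact smul_mem _ _ ih
  -- every element of W is ψ of an element of W
  have hWψ' : ∀ w ∈ W, ∃ v ∈ W, ψ v = w := by
    intro w hw
    induction hw using Submodule.span_induction with
    | mem x hx => exact ⟨x, subset_span hx, hx⟩
    | zero => exact ⟨0, zero_mem W, by rw [← hψeq, map_zero]⟩
    | add x y hx hy ihx ihy =>
        obtain ⟨vx, hvxW, hvx⟩ := ihx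
        obtain ⟨vy, hvyW, hvy⟩ := ihy
        exact ⟨vx + vy, add_mem hvxW hvyW, by rw [hadd, hvx, hvy]⟩
    | smul a x hx ih =>
        obtain ⟨v, hvW, hv⟩ := ih
        obtain ⟨r, hr⟩ := IsAlgClosed.exists_pow_nat_eq a hp.pos
        exact ⟨r • v, smul_mem _ _ hvW, by rw [hsmul, hr, hv]⟩
  -- Artin-Schreier surjectivity on W
  have hAS : ∀ w ∈ W, ∃ cc ∈ W, ψ cc - cc = w := by
    intro w hw
    obtain ⟨l, hsup, hsum⟩ := mem_span_set.mp hw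
    choose ρ hρ using fun x : V => AS_root (k := k) hp (l x)
    refine ⟨∑ x ∈ l.support, ρ x • x, ?_, ?_⟩
    · exact Submodule.sum_mem _ fun x hx => smul_mem _ _ (subset_span (hsup hx))
    · have hψsum : ψ (∑ x ∈ l.support, ρ x • x) = ∑ x ∈ l.support, (ρ x ^ p) • x := by
        rw [← hψeq, map_sum]
        refine Finset.sum_congr rfl fun x hx => ?_
        have hxF : ψ x = x := hsup hx
        rw [hψeq, hsmul, hxF]
      rw [hψsum, ← Finset.sum_sub_distrib]
      rw [← hsum]
      refine Finset.sum_congr rfl fun x hx => ?_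
      rw [← sub_smul, hρ]
  -- quotient
  have hrep : ∀ x : V ⧸ W, ∃ v : V, Submodule.Quotient.mk v = x :=
    Submodule.Quotient.mk_surjective W
  choose rep hrepeq using hrep
  set ψq : V ⧸ W → V ⧸ W := fun x => Submodule.Quotient.mk (ψ (rep x)) with hψqdef
  have hψq : ∀ v : V, ψq (Submodule.Quotient.mk v) = Submodule.Quotient.mk (ψ v) := by
    intro v
    apply (Submodule.Quotient.eq W).mpr
    have h1 : rep (Submodule.Quotient.mk v) - v ∈ W :=
      (Submodule.Quotient.eq W).mp (hrepeq (Submodule.Quotient.mk v))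
    have := hWψ _ h1
    rwa [← hψeq, map_sub, hψeq, hψeq] at this
  have hq_add : ∀ x y : V ⧸ W, ψq (x + y) = ψq x + ψq y := by
    intro x y
    obtain ⟨vx, rfl⟩ := Submodule.Quotient.mk_surjective W x
    obtain ⟨vy, rfl⟩ := Submodule.Quotient.mk_surjective W y
    rw [← Submodule.Quotient.mk_add, hψq, hψq, hψq, ← Submodule.Quotient.mk_add, hadd]
  have hq_smul : ∀ (a : k) (x : V ⧸ W), ψq (a • x) = a ^ p • ψq x := by
    intro a x
    obtain ⟨v, rfl⟩ := Submodule.Quotient.mk_surjective W x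
    rw [← Submodule.Quotient.mk_smul, hψq, hψq, ← Submodule.Quotient.mk_smul, hsmul]
  have hq_inj : Function.Injective ψq := by
    intro x y hxy
    obtain ⟨vx, rfl⟩ := Submodule.Quotient.mk_surjective W x
    obtain ⟨vy, rfl⟩ := Submodule.Quotient.mk_surjective W y
    rw [hψq, hψq] at hxy
    have h1 : ψ vx - ψ vy ∈ W := (Submodule.Quotient.eq W).mp hxy
    have h2 : ψ (vx - vy) ∈ W := by rwa [← hψeq, map_sub, hψeq, hψeq]
    obtain ⟨c, hcW, hc⟩ := hWψ' _ h2
    have : c = vx - vy := hinj hc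
    exact (Submodule.Quotient.eq W).mpr (this ▸ hcW)
  -- conclude
  have hall : ∀ x : V ⧸ W, x = 0 := by
    by_contra hcon
    push_neg at hcon
    obtain ⟨x, hx⟩ := hcon
    obtain ⟨y, hy0, hyfix⟩ := exists_fixed hp ψq hq_add hq_smul hq_inj x hx
    obtain ⟨v, rfl⟩ := Submodule.Quotient.mk_surjective W y
    rw [hψq] at hyfix
    have h1 : ψ v - v ∈ W := (Submodule.Quotient.eq W).mp hyfix
    obtain ⟨cc, hccW, hcc⟩ := hAS _ h1
    have hfix : ψ (v - cc) = v - cc := by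
      rw [← hψeq, map_sub, hψeq, hψeq]
      have : ψ v - ψ cc - (v - cc) = (ψ v - v) - (ψ cc - cc) := by abel
      have h2 : ψ v - ψ cc - (v - cc) = 0 := by rw [this, hcc]; exact sub_self _
      linear_combination (norm := abel) h2
    have hvW : v ∈ W := by
      have : v - cc ∈ W := subset_span hfix
      have := add_mem this hccW
      simpa using this
    exact hy0 ((Submodule.Quotient.mk_eq_zero W).mpr hvW)
  rw [eq_top_iff]
  intro v _
  exact (Submodule.Quotient.mk_eq_zero W).mp (hall (Submodule.Quotient.mk v))

/-- solutions of `c ^ p = c` are exactly the image of `ZMod p`. -/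
lemma frobenius_fixed_equiv (hp : p.Prime) :
    haveI := Fact.mk hp
    Function.Bijective (fun z : ZMod p => (⟨ZMod.castHom dvd_rfl k z,
      by rw [← map_pow, ZMod.pow_card]⟩ : {c : k // c ^ p = c})) := by
  classical
  haveI := Fact.mk hp
  set φ : ZMod p →+* k := ZMod.castHom dvd_rfl k with hφ
  have hφinj : Function.Injective φ := ZMod.castHom_injective k
  constructor
  · intro a b h
    exact hφinj (congrArg Subtype.val h)
  · rintro ⟨c, hc⟩
    set f : k[X] := X ^ p - X with hf
    have h1 : (X : k[X]).degree < (X ^ p : k[X]).degree := by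
      rw [degree_X, degree_X_pow]
      exact_mod_cast hp.one_lt
    have hfdeg : f.degree = p := by
      rw [hf, degree_sub_eq_left_of_degree_lt h1, degree_X_pow]
    have hfne : f ≠ 0 := by
      intro h
      rw [h, degree_zero] at hfdeg
      exact (by simp : (⊥ : WithBot ℕ) ≠ (p : WithBot ℕ)) hfdeg
    have hfnat : f.natDegree = p := natDegree_eq_of_degree_eq_some hfdeg
    set img : Finset k := Finset.image (fun z : ZMod p => φ z) Finset.univ with himg
    have himgcard : img.card = p := by
      rw [himg, Finset.card_image_of_injective _ hφinj, Finset.card_univ, ZMod.card]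
    have hsub : img ⊆ f.roots.toFinset := by
      intro x hx
      rw [himg, Finset.mem_image] at hx
      obtain ⟨z, _, rfl⟩ := hx
      rw [Multiset.mem_toFinset, Polynomial.mem_roots hfne]
      show f.eval (φ z) = 0
      rw [hf]
      simp only [eval_sub, eval_pow, eval_X]
      rw [← map_pow, ZMod.pow_card, sub_self]
    have hcard : f.roots.toFinset.card ≤ p := by
      calc f.roots.toFinset.card ≤ Multiset.card f.roots := Multiset.toFinset_card_le _
        _ ≤ f.natDegree := card_roots' f
        _ = p := hfnat
    have heq : img = f.roots.toFinset := Finset.eq_of_subset_of_card_le hsub (by omega)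
    have hcmem : c ∈ f.roots.toFinset := by
      rw [Multiset.mem_toFinset, Polynomial.mem_roots hfne]
      show f.eval c = 0
      rw [hf]
      simp only [eval_sub, eval_pow, eval_X]
      rw [hc, sub_self]
    rw [← heq, himg, Finset.mem_image] at hcmem
    obtain ⟨z, _, hz⟩ := hcmem
    exact ⟨z, Subtype.ext hz⟩

lemma card_fixed [FiniteDimensional k V] (hp : p.Prime)
    (ψ : V → V) (hadd : ∀ x y, ψ (x + y) = ψ x + ψ y)
    (hsmul : ∀ (a : k) (v : V), ψ (a • v) = a ^ p • ψ v)
    (hinj : Function.Injective ψ) :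
    Nat.card {v : V // ψ v = v} = p ^ (Module.finrank k V) := by
  classical
  haveI := Fact.mk hp
  set Ψ : V →+ V := AddMonoidHom.mk' ψ hadd with hΨ
  have hψeq : ∀ v, Ψ v = ψ v := fun _ => rfl
  have hspan := span_fixed hp ψ hadd hsmul hinj
  obtain ⟨s, hsF, hsspan, hsli⟩ := exists_linearIndependent k {v : V | ψ v = v}
  rw [hspan] at hsspan
  haveI : Finite s := hsli.finite
  haveI : Fintype s := Fintype.ofFinite s
  have hBsp : ⊤ ≤ span k (Set.range (Subtype.val : s → V)) := by
    rw [Subtype.range_coe, hsspan]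
  set B : Module.Basis s k V := Module.Basis.mk hsli hBsp with hB
  have hBx : ∀ x : s, B x = ↑x := fun x => Module.Basis.mk_apply hsli hBsp x
  have hfixb : ∀ x : s, ψ ↑x = ↑x := fun x => hsF x.2
  have hrepr : ∀ v : V, ∑ x : s, B.repr v x • (x : V) = v := by
    intro v
    have := B.sum_repr v
    refine Eq.trans ?_ this
    exact Finset.sum_congr rfl fun x _ => by rw [hBx]
  have huniq : ∀ (d c : s → k), ∑ x : s, d x • (x : V) = ∑ x : s, c x • (x : V) →
      ∀ x, d x = c x := by
    intro d c h x
    have hsub : ∑ y : s, (d y - c y) • (y : V) = 0 := by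
      have h2 : ∑ y : s, (d y - c y) • (y : V)
          = (∑ y : s, d y • (y : V)) - ∑ y : s, c y • (y : V) := by
        rw [← Finset.sum_sub_distrib]
        exact Finset.sum_congr rfl fun y _ => sub_smul _ _ _
      rw [h2, h, sub_self]
    have := Fintype.linearIndependent_iff.mp hsli (fun y => d y - c y) hsub x
    have h3 : d x - c x = 0 := this
    linear_combination h3
  have hψsum : ∀ c : s → k, ψ (∑ x : s, c x • (x : V)) = ∑ x : s, (c x ^ p) • (x : V) := by
    intro c
    rw [← hψeq, map_sum]
    exact Finset.sum_congr rfl fun x _ => by rw [hψeq, hsmul, hfixb]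
  set Rp := {c : k // c ^ p = c} with hRp
  have toprop : ∀ v : {v : V // ψ v = v}, ∀ x : s, (B.repr ↑v x) ^ p = B.repr ↑v x := by
    rintro ⟨v, hv⟩ x
    have h1 : ψ v = ψ (∑ y : s, B.repr v y • (y : V)) := by rw [hrepr v]
    rw [hψsum, hv] at h1
    have h2 : ∑ y : s, (B.repr v y ^ p) • (y : V) = ∑ y : s, B.repr v y • (y : V) := by
      rw [← h1, hrepr v]
    exact huniq _ _ h2 x
  set toF : {v : V // ψ v = v} → (s → Rp) :=
    fun v x => ⟨B.repr ↑v x, toprop v x⟩ with htoF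
  set invF : (s → Rp) → {v : V // ψ v = v} :=
    fun c => ⟨∑ x : s, (c x : k) • (x : V), by
      rw [hψsum]
      exact Finset.sum_congr rfl fun x _ => by rw [(c x).2]⟩ with hinvF
  have hli : Function.LeftInverse invF toF := by
    rintro ⟨v, hv⟩
    apply Subtype.ext
    exact hrepr v
  have hri : Function.RightInverse invF toF := by
    intro c
    funext x
    apply Subtype.ext
    show B.repr (∑ y : s, (c y : k) • (y : V)) x = (c x : k)
    exact huniq (fun y => B.repr (∑ z : s, (c z : k) • (z : V)) y)
      (fun y => (c y : k)) (by rw [hrepr]) x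
  have hequiv : {v : V // ψ v = v} ≃ (s → Rp) := ⟨toF, invF, hli, hri⟩
  have hzequiv : Rp ≃ ZMod p := (Equiv.ofBijective _ (frobenius_fixed_equiv hp)).symm
  have hcard : Nat.card {v : V // ψ v = v} = Nat.card (s → ZMod p) :=
    Nat.card_congr (hequiv.trans (Equiv.piCongrRight fun _ => hzequiv))
  rw [hcard, Nat.card_eq_fintype_card, Fintype.card_fun, ZMod.card,
    Module.finrank_eq_card_basis B]

lemma sub_surj [FiniteDimensional k V] (hp : p.Prime)
    (ψ : V → V) (hadd : ∀ x y, ψ (x + y) = ψ x + ψ y)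
    (hsmul : ∀ (a : k) (v : V), ψ (a • v) = a ^ p • ψ v)
    (hinj : Function.Injective ψ) :
    Function.Surjective (fun v => v - ψ v) := by
  classical
  set Ψ : V →+ V := AddMonoidHom.mk' ψ hadd with hΨ
  have hψeq : ∀ v, Ψ v = ψ v := fun _ => rfl
  have hspan := span_fixed hp ψ hadd hsmul hinj
  intro w
  have hw : w ∈ span k {v : V | ψ v = v} := by rw [hspan]; trivial
  obtain ⟨l, hsup, hsum⟩ := mem_span_set.mp hw
  choose ρ hρ using fun x : V => AS_root (k := k) hp (- l x)
  refine ⟨∑ x ∈ l.support, ρ x • x, ?_⟩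
  show (∑ x ∈ l.support, ρ x • x) - ψ (∑ x ∈ l.support, ρ x • x) = w
  have hψsum : ψ (∑ x ∈ l.support, ρ x • x) = ∑ x ∈ l.support, (ρ x ^ p) • x := by
    rw [← hψeq, map_sum]
    refine Finset.sum_congr rfl fun x hx => ?_
    have hxF : ψ x = x := hsup hx
    rw [hψeq, hsmul, hxF]
  rw [hψsum, ← Finset.sum_sub_distrib, ← hsum]
  refine Finset.sum_congr rfl fun x hx => ?_
  rw [← sub_smul]
  congr 1
  have h4 := hρ x
  linear_combination -h4

end LangLemmas

/-- If `i : V → V` is an injective `k`-linear map and `C : V → V` a surjective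
Frobenius-semilinear map on a finite-dimensional vector space over an algebraically
closed field of characteristic `p`, then `i - C` is surjective with kernel of
cardinality `p ^ dim_k V`. -/
theorem stmt17 (k : Type*) [Field k] [IsAlgClosed k] (p : ℕ) [CharP k p] (hp : 0 < p)
    (V : Type*) [AddCommGroup V] [Module k V] [FiniteDimensional k V]
    (i : V →ₗ[k] V) (hi : Function.Injective i)
    (C : V → V) (hC : Function.Surjective C)
    (Cadd : ∀ x y : V, C (x + y) = C x + C y)
    (Csmul : ∀ (a : k) (v : V), C (a • v) = a ^ p • C v) :
    Function.Surjective (fun v => i v - C v) ∧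
    Nat.card {v : V // i v - C v = 0} = p ^ (Module.finrank k V) := by
  classical
  have hprime : p.Prime := (CharP.char_is_prime_or_zero k p).resolve_right (by omega)
  set Cm : V →+ V := AddMonoidHom.mk' C Cadd with hCm
  have hCeq : ∀ v, Cm v = C v := fun _ => rfl
  -- C is injective
  have hCinj : Function.Injective C := by
    set b := Module.finBasis k V with hb
    have hspanC : ⊤ ≤ span k (Set.range fun j => C (b j)) := by
      intro v _
      obtain ⟨w, rfl⟩ := hC v
      have hw : w = ∑ j, b.repr w j • b j := (b.sum_repr w).symm
      rw [hw, ← hCeq, map_sum]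
      refine Submodule.sum_mem _ fun j _ => ?_
      rw [hCeq, Csmul]
      exact Submodule.smul_mem _ _ (subset_span ⟨j, rfl⟩)
    have hliC : LinearIndependent k (fun j => C (b j)) :=
      linearIndependent_of_top_le_span_of_card_eq_finrank hspanC (by simp)
    have hker : ∀ x : V, C x = 0 → x = 0 := by
      intro x hx
      have hxr : x = ∑ j, b.repr x j • b j := (b.sum_repr x).symm
      have h0 : ∑ j, (b.repr x j ^ p) • C (b j) = 0 := by
        have hCx : C x = ∑ j, (b.repr x j ^ p) • C (b j) := by
          conv_lhs => rw [hxr]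
          rw [← hCeq, map_sum]
          exact Finset.sum_congr rfl fun j _ => by rw [hCeq, Csmul]
        rw [← hCx, hx]
      have hall := Fintype.linearIndependent_iff.mp hliC _ h0
      rw [hxr]
      refine Finset.sum_eq_zero fun j _ => ?_
      have : b.repr x j = 0 := by
        have h2 := hall j
        exact pow_eq_zero_iff hprime.pos.ne' |>.mp h2
      rw [this, zero_smul]
    intro x y hxy
    have : C (x - y) = 0 := by
      rw [← hCeq, map_sub, hCeq, hCeq, hxy, sub_self]
    have := hker _ this
    exact sub_eq_zero.mp this
  -- set up ψ
  have hisurj : Function.Surjective i := (LinearMap.injective_iff_surjective).mp hi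
  set I : V ≃ₗ[k] V := LinearEquiv.ofBijective i ⟨hi, hisurj⟩ with hI
  have hIap : ∀ v, I v = i v := fun v => rfl
  set ψ : V → V := fun v => I.symm (C v) with hψ
  have hadd : ∀ x y, ψ (x + y) = ψ x + ψ y := by
    intro x y
    rw [hψ]
    simp only [Cadd, map_add]
  have hsmul : ∀ (a : k) (v : V), ψ (a • v) = a ^ p • ψ v := by
    intro a v
    rw [hψ]
    simp only [Csmul, map_smul]
  have hψinj : Function.Injective ψ := fun a b h => hCinj (I.symm.injective h)
  have hIC : ∀ v, i v - C v = I (v - ψ v) := by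
    intro v
    rw [map_sub, hIap]
    congr 1
    rw [hψ]
    exact (I.apply_symm_apply (C v)).symm
  constructor
  · intro u
    obtain ⟨v, hv⟩ := sub_surj hprime ψ hadd hsmul hψinj (I.symm u)
    refine ⟨v, ?_⟩
    show i v - C v = u
    have hv' : v - ψ v = I.symm u := hv
    rw [hIC v, hv', I.apply_symm_apply]
  · have hiff : ∀ v : V, (i v - C v = 0) ↔ (ψ v = v) := by
      intro v
      rw [hIC v, LinearEquiv.map_eq_zero_iff, sub_eq_zero]
      exact eq_comm
    rw [Nat.card_congr (Equiv.subtypeEquivRight hiff)]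
    exact card_fixed hprime ψ hadd hsmul hψinj
end
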